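/- Let p₁ ≥ p₂ ≥ ⋯ ≥ pₙ ≥ 0 be processing times and m ≥ 1 machines. Let i₀ be the largest index such that p_{i₀} > (Σ_{j=i₀}^n p_j)/(m − i₀ + 1), or i₀ = 0 if none exists. Define L_i = p_i for 1 ≤ i ≤ i₀ and L_i = (Σ_{j=i₀+1}^n p_j)/(m − i₀) for i₀ < i ≤ m. Then for any nonincreasing nonnegative vector (T₁, …, T_m) satisfying Σ_{k=1}^k p_k ≤ Σ_{k=1}^k T_k for all k ≤ min(m,n) and Σ_{i=1}^m T_i ≥ Σ_{j=1}^n p_j, we have Σ_{i=1}^k L_i ≤ Σ_{i=1}^k T_i for all k = 1, …, m. -/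

import Mathlib

/-- Weak optimality of the MCR (modified McNaughton) schedule for preemptive
scheduling on identical machines.  With `p₁ ≥ ⋯ ≥ pₙ ≥ 0`, `i₀` the largest index
with `p_{i₀} > (Σ_{j=i₀}^n p_j)/(m − i₀ + 1)` (or `i₀ = 0`), and loads
`L_i = p_i` for `i ≤ i₀`, `L_i = (Σ_{j=i₀+1}^n p_j)/(m − i₀)` for `i₀ < i ≤ m`,
every nonincreasing nonnegative vector `T` whose top-`k` prefix sums dominate
those of `p` and whose total is at least `Σ p` satisfies
`Σ_{i≤k} L_i ≤ Σ_{i≤k} T_i` for every `k ≤ m`. -/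
theorem mcr_weakly_optimal (m n i₀ : ℕ) (p T : ℕ → ℝ)
    (hm : 1 ≤ m) (hi₀n : i₀ ≤ n) (hi₀m : i₀ < m)
    (hp0 : ∀ i, 1 ≤ i → i ≤ n → 0 ≤ p i)
    (hp : ∀ i j, 1 ≤ i → i ≤ j → j ≤ n → p j ≤ p i)
    (hprop : 1 ≤ i₀ →
      (∑ j ∈ Finset.Icc i₀ n, p j) / ((m : ℝ) - i₀ + 1) < p i₀)
    (hmax : ∀ i, i₀ < i → i ≤ min m n →
      p i ≤ (∑ j ∈ Finset.Icc i n, p j) / ((m : ℝ) - i + 1))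
    (hT : ∀ i j, 1 ≤ i → i ≤ j → j ≤ m → T j ≤ T i)
    (hT0 : ∀ i, 1 ≤ i → i ≤ m → 0 ≤ T i)
    (hTk : ∀ k, 1 ≤ k → k ≤ min m n →
      ∑ i ∈ Finset.Icc 1 k, p i ≤ ∑ i ∈ Finset.Icc 1 k, T i)
    (hTP : ∑ j ∈ Finset.Icc 1 n, p j ≤ ∑ i ∈ Finset.Icc 1 m, T i) :
    ∀ k, 1 ≤ k → k ≤ m →
      ∑ i ∈ Finset.Icc 1 k,
          (if i ≤ i₀ then p i else (∑ j ∈ Finset.Icc (i₀ + 1) n, p j) / ((m : ℝ) - i₀)) ≤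
        ∑ i ∈ Finset.Icc 1 k, T i := by

  intro k hk1 hkm
  have hIcc : ∀ x : ℕ, Finset.Icc 1 x = Finset.Ioc 0 x := fun x => Finset.Icc_add_one_left_eq_Ioc 0 x
  set c : ℝ := (∑ j ∈ Finset.Icc (i₀ + 1) n, p j) / ((m : ℝ) - i₀) with hc
  have hmi : (0:ℝ) < (m:ℝ) - i₀ := by
    have : (i₀:ℝ) < m := by exact_mod_cast hi₀m
    linarith
  have hcsum : ∑ j ∈ Finset.Icc (i₀ + 1) n, p j = ((m:ℝ) - i₀) * c := by
    rw [hc, mul_div_cancel₀ _ hmi.ne']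
  by_cases hki : k ≤ i₀
  · have heq : ∀ i ∈ Finset.Icc 1 k, (if i ≤ i₀ then p i else c) = p i := by
      intro i hi
      simp only [Finset.mem_Icc] at hi
      rw [if_pos (hi.2.trans hki)]
    rw [Finset.sum_congr rfl heq]
    exact hTk k hk1 (le_min hkm (hki.trans hi₀n))
  · push_neg at hki
    have hcard : ∀ a b : ℕ, a ≤ b → ((Finset.Ioc a b).card : ℝ) = (b:ℝ) - a := by
      intro a b hab
      rw [Nat.card_Ioc, Nat.cast_sub hab]
    have hsplitL : ∑ i ∈ Finset.Icc 1 k, (if i ≤ i₀ then p i else c)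
        = (∑ i ∈ Finset.Icc 1 i₀, p i) + ((k:ℝ) - i₀) * c := by
      rw [hIcc k, ← Finset.sum_Ioc_consecutive _ (Nat.zero_le i₀) hki.le, ← hIcc i₀]
      congr 1
      · exact Finset.sum_congr rfl (fun i hi => by
          simp only [Finset.mem_Icc] at hi; rw [if_pos hi.2])
      · rw [Finset.sum_congr rfl (fun i hi => by
            simp only [Finset.mem_Ioc] at hi
            rw [if_neg (by omega)]), Finset.sum_const, nsmul_eq_mul, hcard _ _ hki.le]
    rw [hsplitL]
    have hA : (∑ i ∈ Finset.Icc 1 i₀, p i) ≤ ∑ i ∈ Finset.Icc 1 i₀, T i := by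
      rcases Nat.eq_zero_or_pos i₀ with h0 | h0
      · simp [h0]
      · exact hTk i₀ h0 (le_min hi₀m.le hi₀n)
    by_cases hcT : c ≤ T k
    · have hsplitT : ∑ i ∈ Finset.Icc 1 k, T i
          = (∑ i ∈ Finset.Icc 1 i₀, T i) + ∑ i ∈ Finset.Ioc i₀ k, T i := by
        rw [hIcc k, ← Finset.sum_Ioc_consecutive _ (Nat.zero_le i₀) hki.le, ← hIcc i₀]
      have hlow : ((k:ℝ) - i₀) * c ≤ ∑ i ∈ Finset.Ioc i₀ k, T i := by
        have : ∀ i ∈ Finset.Ioc i₀ k, c ≤ T i := by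
          intro i hi
          simp only [Finset.mem_Ioc] at hi
          exact hcT.trans (hT i k (by omega) hi.2 hkm)
        calc ((k:ℝ) - i₀) * c = (Finset.Ioc i₀ k).card • c := by
              rw [nsmul_eq_mul, hcard _ _ hki.le]
          _ = ∑ _i ∈ Finset.Ioc i₀ k, c := (Finset.sum_const c).symm
          _ ≤ _ := Finset.sum_le_sum this
      linarith
    · push_neg at hcT
      have hsplitT : ∑ i ∈ Finset.Icc 1 m, T i
          = (∑ i ∈ Finset.Icc 1 k, T i) + ∑ i ∈ Finset.Ioc k m, T i := by
        rw [hIcc m, ← Finset.sum_Ioc_consecutive _ (Nat.zero_le k) hkm, ← hIcc k]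
      have htail : ∑ i ∈ Finset.Ioc k m, T i ≤ ((m:ℝ) - k) * c := by
        have : ∀ i ∈ Finset.Ioc k m, T i ≤ c := by
          intro i hi
          simp only [Finset.mem_Ioc] at hi
          exact (hT k i hk1 hi.1.le hi.2).trans hcT.le
        calc ∑ i ∈ Finset.Ioc k m, T i ≤ ∑ _i ∈ Finset.Ioc k m, c :=
              Finset.sum_le_sum this
          _ = (Finset.Ioc k m).card • c := Finset.sum_const c
          _ = ((m:ℝ) - k) * c := by rw [nsmul_eq_mul, hcard _ _ hkm]
      have hsplitP : ∑ j ∈ Finset.Icc 1 n, p j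
          = (∑ i ∈ Finset.Icc 1 i₀, p i) + ((m:ℝ) - i₀) * c := by
        rw [hIcc n, ← Finset.sum_Ioc_consecutive _ (Nat.zero_le i₀) hi₀n, ← hIcc i₀,
          ← hcsum]
        congr 1
        exact congrArg (fun s => Finset.sum s p) (Finset.Icc_add_one_left_eq_Ioc i₀ n).symm
      rw [hsplitP, hsplitT] at hTP
      linarith
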